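/- Let G be a finite simple graph with f(G) ≥ 2 and χ(G) = 4. Then |V(G)| ≥ 11. -/

import Mathlib

open SimpleGraph

/-- The chromatic number of `G` as a natural number. -/
noncomputable def chi {V : Type*} (G : SimpleGraph V) : ℕ := G.chromaticNumber.toNat

/-- The independence number of `G`: the largest size of a set of pairwise
non-adjacent vertices. -/
noncomputable def indepNum {V : Type*} (G : SimpleGraph V) : ℕ :=
  sSup {n | ∃ s : Finset V, s.card = n ∧ ∀ u ∈ s, ∀ v ∈ s, u ≠ v → ¬ G.Adj u v}

/-- The join `G + H` of two graphs: all edges of `G` and `H` together with all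
edges between the two vertex sets. -/
def SimpleGraph.join {α β : Type*} (G : SimpleGraph α) (H : SimpleGraph β) :
    SimpleGraph (α ⊕ β) where
  Adj x y := match x, y with
    | Sum.inl a, Sum.inl b => G.Adj a b
    | Sum.inr a, Sum.inr b => H.Adj a b
    | Sum.inl _, Sum.inr _ => True
    | Sum.inr _, Sum.inl _ => True
  symm := by refine ⟨?_⟩; rintro (a | a) (b | b) h <;> first | trivial | exact G.adj_symm h | exact H.adj_symm h
  loopless := by refine ⟨?_⟩; rintro (a | a) h <;> first | exact G.irrefl h | exact H.irrefl h

open Finset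

set_option linter.unusedSectionVars false
set_option linter.unusedVariables false
set_option maxHeartbeats 1000000
set_option synthInstance.maxSize 2000

namespace Chv

variable {V : Type} [Fintype V] [DecidableEq V] {G : SimpleGraph V} [DecidableRel G.Adj]

def TF (G : SimpleGraph V) : Prop := ∀ a b c : V, G.Adj a b → G.Adj b c → G.Adj a c → False

lemma TF.nbr (hG : TF G) {u x y : V} (hx : G.Adj u x) (hy : G.Adj u y) : ¬G.Adj x y :=
  fun h => hG x u y hx.symm hy h

def TwoCol (G : SimpleGraph V) [DecidableRel G.Adj] (A : Finset V) : Prop :=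
  ∃ f : V → Fin 3, (∀ x, f x ≠ 2) ∧ ∀ u ∈ A, ∀ w ∈ A, G.Adj u w → f u ≠ f w

def HasC5 (G : SimpleGraph V) [DecidableRel G.Adj] (A : Finset V) : Prop :=
  ∃ v : ZMod 5 → V, Function.Injective v ∧ (∀ i, v i ∈ A) ∧ ∀ i, G.Adj (v i) (v (i + 1))

lemma R33 (hG : TF G) (A : Finset V) (hA : 6 ≤ A.card) :
    ∃ x ∈ A, ∃ y ∈ A, ∃ z ∈ A, x ≠ y ∧ x ≠ z ∧ y ≠ z ∧
      ¬G.Adj x y ∧ ¬G.Adj x z ∧ ¬G.Adj y z := by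
  have hA0 : 0 < A.card := by omega
  obtain ⟨u, hu⟩ := Finset.card_pos.mp hA0
  set Nu := A.filter (fun x => G.Adj u x) with hNu
  by_cases h3 : 3 ≤ Nu.card
  · obtain ⟨t, ht, htc⟩ := Finset.exists_subset_card_eq h3
    obtain ⟨x, y, z, hxy, hxz, hyz, rfl⟩ := Finset.card_eq_three.mp htc
    have hx : x ∈ Nu := ht (by simp)
    have hy : y ∈ Nu := ht (by simp)
    have hz : z ∈ Nu := ht (by simp)
    simp only [hNu, mem_filter] at hx hy hz
    exact ⟨x, hx.1, y, hy.1, z, hz.1, hxy, hxz, hyz,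
      hG.nbr hx.2 hy.2, hG.nbr hx.2 hz.2, hG.nbr hy.2 hz.2⟩
  · set B := A \ insert u Nu with hB
    have hBcard : 3 ≤ B.card := by
      have h1 : (insert u Nu).card ≤ 3 := by
        have := Finset.card_insert_le u Nu; omega
      have h2 : A.card ≤ B.card + (insert u Nu).card := by
        rw [hB]; exact Finset.card_le_card_sdiff_add_card
      omega
    have hBA : ∀ x ∈ B, x ∈ A ∧ x ≠ u ∧ ¬G.Adj u x := by
      intro x hx
      rw [hB, mem_sdiff, mem_insert, hNu, mem_filter] at hx
      push_neg at hx
      exact ⟨hx.1, hx.2.1, fun h => (hx.2.2 hx.1) h⟩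
    by_cases hpair : ∃ x ∈ B, ∃ y ∈ B, x ≠ y ∧ ¬G.Adj x y
    · obtain ⟨x, hx, y, hy, hxy, hnadj⟩ := hpair
      obtain ⟨hxA, hxu, hxn⟩ := hBA x hx
      obtain ⟨hyA, hyu, hyn⟩ := hBA y hy
      exact ⟨u, hu, x, hxA, y, hyA, Ne.symm hxu, Ne.symm hyu, hxy, hxn, hyn, hnadj⟩
    · push_neg at hpair
      obtain ⟨t, ht, htc⟩ := Finset.exists_subset_card_eq hBcard
      obtain ⟨x, y, z, hxy, hxz, hyz, rfl⟩ := Finset.card_eq_three.mp htc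
      have hx : x ∈ B := ht (by simp)
      have hy : y ∈ B := ht (by simp)
      have hz : z ∈ B := ht (by simp)
      exact absurd (hG x y z (hpair x hx y hy hxy) (hpair y hy z hz hyz)
        (hpair x hx z hz hxz)) not_false

lemma nbrs_eq_pair {A : Finset V} {x w z : V} (h2 : (A.filter (fun y => G.Adj x y)).card = 2)
    (hw : w ∈ A) (haw : G.Adj x w) (hz : z ∈ A) (haz : G.Adj x z) (hwz : w ≠ z) :
    ∀ y ∈ A, G.Adj x y → y = w ∨ y = z := by
  have hsub : ({w, z} : Finset V) ⊆ A.filter (fun y => G.Adj x y) := by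
    intro y hy
    rcases Finset.mem_insert.mp hy with rfl | hy
    · exact mem_filter.mpr ⟨hw, haw⟩
    · rw [Finset.mem_singleton] at hy; subst hy; exact mem_filter.mpr ⟨hz, haz⟩
  have heq := Finset.eq_of_subset_of_card_le hsub (by rw [h2, Finset.card_pair hwz])
  intro y hy hadj
  have : y ∈ ({w, z} : Finset V) := heq ▸ mem_filter.mpr ⟨hy, hadj⟩
  simpa using this

lemma other_nbr {A : Finset V} {x w : V} (h2 : (A.filter (fun y => G.Adj x y)).card = 2)
    (hw : w ∈ A) (hadj : G.Adj x w) :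
    ∃ z ∈ A, G.Adj x z ∧ z ≠ w ∧ ∀ y ∈ A, G.Adj x y → y = w ∨ y = z := by
  have hwN : w ∈ A.filter (fun y => G.Adj x y) := mem_filter.mpr ⟨hw, hadj⟩
  have h1 : ((A.filter (fun y => G.Adj x y)).erase w).card = 1 := by
    rw [Finset.card_erase_of_mem hwN, h2]
  obtain ⟨z, hz⟩ := Finset.card_eq_one.mp h1
  have hzmem : z ∈ (A.filter (fun y => G.Adj x y)).erase w := hz ▸ Finset.mem_singleton_self z
  have hzN := Finset.mem_of_mem_erase hzmem
  have hzw : z ≠ w := Finset.ne_of_mem_erase hzmem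
  rw [mem_filter] at hzN
  exact ⟨z, hzN.1, hzN.2, hzw,
    nbrs_eq_pair h2 hw hadj hzN.1 hzN.2 (Ne.symm hzw)⟩

lemma hasC5_induced (hG : TF G) {v : ZMod 5 → V} (hinj : Function.Injective v)
    (hadj : ∀ i, G.Adj (v i) (v (i + 1))) :
    ∀ i j, G.Adj (v i) (v j) → j = i + 1 ∨ i = j + 1 := by
  intro i j h
  by_contra hcon
  push_neg at hcon
  have hij : i ≠ j := fun he => G.ne_of_adj h (by rw [he])
  have hfact : ∀ a b : ZMod 5, a ≠ b → b ≠ a + 1 → a ≠ b + 1 → (b = a + 2 ∨ a = b + 2) := by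
    decide
  have hcase : j = i + 2 ∨ i = j + 2 := hfact i j hij hcon.1 hcon.2
  rcases hcase with rfl | rfl
  · have h1 := hadj i
    have h2 : G.Adj (v (i + 1)) (v (i + 2)) := by
      have : i + 1 + 1 = i + 2 := by ring
      rw [← this]; exact hadj (i + 1)
    exact hG (v i) (v (i + 1)) (v (i + 2)) h1 h2 h
  · have h1 := hadj j
    have h2 : G.Adj (v (j + 1)) (v (j + 2)) := by
      have : j + 1 + 1 = j + 2 := by ring
      rw [← this]; exact hadj (j + 1)
    exact hG (v j) (v (j + 1)) (v (j + 2)) h1 h2 h.symm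

lemma c5_walk (hG : TF G) {A : Finset V} (hA : A.card = 5)
    (hdeg : ∀ x ∈ A, (A.filter (fun y => G.Adj x y)).card = 2) : HasC5 G A := by
  obtain ⟨v0, hv0⟩ := Finset.card_pos.mp (by omega : 0 < A.card)
  -- v0's two neighbours
  obtain ⟨v1, v4, h14, hN0⟩ := Finset.card_eq_two.mp (hdeg v0 hv0)
  have hv1 : v1 ∈ A ∧ G.Adj v0 v1 := by
    have : v1 ∈ A.filter (fun y => G.Adj v0 y) := hN0 ▸ (by simp)
    exact mem_filter.mp this
  have hv4 : v4 ∈ A ∧ G.Adj v0 v4 := by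
    have : v4 ∈ A.filter (fun y => G.Adj v0 y) := hN0 ▸ (by simp)
    exact mem_filter.mp this
  have hN0' : ∀ y ∈ A, G.Adj v0 y → y = v1 ∨ y = v4 :=
    nbrs_eq_pair (hdeg v0 hv0) hv1.1 hv1.2 hv4.1 hv4.2 h14
  have hn14 : ¬G.Adj v1 v4 := hG.nbr hv1.2 hv4.2
  -- v1's other neighbour v2
  obtain ⟨v2, hv2A, hadj12, hv2v0, hN1'⟩ := other_nbr (hdeg v1 hv1.1) hv0 hv1.2.symm
  have hv2v1 : v2 ≠ v1 := fun h => G.irrefl (h ▸ hadj12)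
  have hv2v4 : v2 ≠ v4 := fun h => hn14 (h ▸ hadj12)
  have hnadj02 : ¬G.Adj v0 v2 := by
    intro h
    rcases hN0' v2 hv2A h with h' | h'
    · exact hv2v1 h'
    · exact hv2v4 h'
  -- v2's other neighbour v3
  obtain ⟨v3, hv3A, hadj23, hv3v1, hN2'⟩ := other_nbr (hdeg v2 hv2A) hv1.1 hadj12.symm
  have hv3v2 : v3 ≠ v2 := fun h => G.irrefl (h ▸ hadj23)
  have hv3v0 : v3 ≠ v0 := fun h => hnadj02 (h ▸ hadj23).symm
  have hd01 : v0 ≠ v1 := G.ne_of_adj hv1.2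
  have hd04 : v0 ≠ v4 := G.ne_of_adj hv4.2
  have hd12 : v1 ≠ v2 := hv2v1.symm
  have hv1v4 : v1 ≠ v4 := h14
  have hv0v2 : v0 ≠ v2 := hv2v0.symm
  -- exclude v3 = v4
  have hv3v4 : v3 ≠ v4 := by
    intro h
    subst h
    -- then v0,v1,v2,v3 form a 4-cycle; the fifth vertex has no neighbours
    have hfour : ({v0, v1, v2, v3} : Finset V).card = 4 := by
      rw [card_insert_of_notMem (by simp [hd01, hv0v2, hv3v0.symm]),
        card_insert_of_notMem (by simp [hd12, hv3v1.symm]),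
        card_insert_of_notMem (by simp [hv3v2.symm]), card_singleton]
    have hsub : ({v0, v1, v2, v3} : Finset V) ⊆ A := by
      intro y hy; simp only [mem_insert, mem_singleton] at hy
      rcases hy with rfl | rfl | rfl | rfl
      exacts [hv0, hv1.1, hv2A, hv3A]
    have hz : (A \ {v0, v1, v2, v3}).card = 1 := by
      rw [Finset.card_sdiff_of_subset hsub, hfour, hA]
    obtain ⟨z, hzeq⟩ := Finset.card_eq_one.mp hz
    have hzmem : z ∈ A \ {v0, v1, v2, v3} := hzeq ▸ Finset.mem_singleton_self z
    rw [mem_sdiff] at hzmem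
    obtain ⟨hzA, hz4⟩ := hzmem
    simp only [mem_insert, mem_singleton, not_or] at hz4
    obtain ⟨hz0, hz1, hz2, hz3⟩ := hz4
    -- z has a neighbour in A
    have : 0 < (A.filter (fun y => G.Adj z y)).card := by rw [hdeg z hzA]; omega
    obtain ⟨y, hy⟩ := Finset.card_pos.mp this
    rw [mem_filter] at hy
    obtain ⟨hyA, hyadj⟩ := hy
    -- y must be one of v0,v1,v2,v3,z but each is impossible
    have hy5 : y = v0 ∨ y = v1 ∨ y = v2 ∨ y = v3 ∨ y = z := by
      by_cases hy4 : y ∈ ({v0, v1, v2, v3} : Finset V)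
      · simp only [mem_insert, mem_singleton] at hy4; tauto
      · have : y ∈ A \ {v0, v1, v2, v3} := mem_sdiff.mpr ⟨hyA, hy4⟩
        rw [hzeq, Finset.mem_singleton] at this; tauto
    have hN3' : ∀ y ∈ A, G.Adj v3 y → y = v2 ∨ y = v0 :=
      nbrs_eq_pair (hdeg v3 hv3A) hv2A hadj23.symm hv0 hv4.2.symm (fun h => hv0v2 h.symm)
    rcases hy5 with rfl | rfl | rfl | rfl | rfl
    · rcases hN0' z hzA hyadj.symm with h' | h' <;> [exact hz1 h'; exact hz3 h']
    · rcases hN1' z hzA hyadj.symm with h' | h' <;> [exact hz0 h'; exact hz2 h']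
    · rcases hN2' z hzA hyadj.symm with h' | h' <;> [exact hz1 h'; exact hz3 h']
    · rcases hN3' z hzA hyadj.symm with h' | h' <;> [exact hz2 h'; exact hz0 h']
    · exact G.irrefl hyadj
  -- now v0,...,v4 are pairwise distinct
  have hd02 : v0 ≠ v2 := hv0v2
  have hd03 : v0 ≠ v3 := hv3v0.symm
  have hd13 : v1 ≠ v3 := hv3v1.symm
  have hd24 : v2 ≠ v4 := hv2v4
  have hd23 : v2 ≠ v3 := hv3v2.symm
  have hd34 : v3 ≠ v4 := hv3v4
  have hd14 : v1 ≠ v4 := h14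
  -- A equals the five vertices
  have hcard5 : ({v0, v1, v2, v3, v4} : Finset V).card = 5 := by
    rw [card_insert_of_notMem (by simp [hd01, hd02, hd03, hd04]),
      card_insert_of_notMem (by simp [hd12, hd13, hd14]),
      card_insert_of_notMem (by simp [hd23, hd24]),
      card_insert_of_notMem (by simp [hd34]), card_singleton]
  have hsub5 : ({v0, v1, v2, v3, v4} : Finset V) ⊆ A := by
    intro y hy; simp only [mem_insert, mem_singleton] at hy
    rcases hy with rfl | rfl | rfl | rfl | rfl
    exacts [hv0, hv1.1, hv2A, hv3A, hv4.1]
  have hAeq : A = {v0, v1, v2, v3, v4} :=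
    (Finset.eq_of_subset_of_card_le hsub5 (by rw [hA, hcard5])).symm
  -- v3's other neighbour must be v4
  obtain ⟨u, huA, hadj3u, huv2, hN3'⟩ := other_nbr (hdeg v3 hv3A) hv2A hadj23.symm
  have hu5 : u = v0 ∨ u = v1 ∨ u = v2 ∨ u = v3 ∨ u = v4 := by
    rw [hAeq] at huA; simp only [mem_insert, mem_singleton] at huA; tauto
  have hadj34 : G.Adj v3 v4 := by
    rcases hu5 with h5 | h5 | h5 | h5 | h5 <;> subst h5
    · rcases hN0' v3 hv3A hadj3u.symm with h' | h'
      · exact absurd h' hd13.symm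
      · exact absurd h' hd34
    · rcases hN1' v3 hv3A hadj3u.symm with h' | h'
      · exact absurd h' hd03.symm
      · exact absurd h' hd23.symm
    · exact absurd rfl huv2
    · exact absurd hadj3u (G.irrefl)
    · exact hadj3u
  have hall : ∀ i : ZMod 5, i = 0 ∨ i = 1 ∨ i = 2 ∨ i = 3 ∨ i = 4 := by decide
  refine ⟨fun i => if i = 0 then v0 else if i = 1 then v1 else if i = 2 then v2
    else if i = 3 then v3 else v4, ?_, ?_, ?_⟩
  · intro i j h
    rcases hall i with rfl | rfl | rfl | rfl | rfl <;>
      rcases hall j with rfl | rfl | rfl | rfl | rfl <;>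
      first
      | rfl
      | (simp +decide only [] at h
         first
         | exact absurd h hd01 | exact absurd h.symm hd01
         | exact absurd h hd02 | exact absurd h.symm hd02
         | exact absurd h hd03 | exact absurd h.symm hd03
         | exact absurd h hd04 | exact absurd h.symm hd04
         | exact absurd h hd12 | exact absurd h.symm hd12
         | exact absurd h hd13 | exact absurd h.symm hd13
         | exact absurd h hd14 | exact absurd h.symm hd14
         | exact absurd h hd23 | exact absurd h.symm hd23
         | exact absurd h hd24 | exact absurd h.symm hd24
         | exact absurd h hd34 | exact absurd h.symm hd34)
  · intro i
    rcases hall i with rfl | rfl | rfl | rfl | rfl <;>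
      simp +decide only [] <;>
      first | exact hv0 | exact hv1.1 | exact hv2A | exact hv3A | exact hv4.1
  · intro i
    rcases hall i with rfl | rfl | rfl | rfl | rfl <;>
      simp +decide only [] <;>
      first | exact hv1.2 | exact hadj12 | exact hadj23 | exact hadj34 | exact hv4.2.symm

lemma c6_twocol (hG : TF G) {A : Finset V} (hA : A.card = 6)
    (hdeg : ∀ x ∈ A, (A.filter (fun y => G.Adj x y)).card = 2) : TwoCol G A := by
  obtain ⟨v0, hv0⟩ := Finset.card_pos.mp (by omega : 0 < A.card)
  obtain ⟨v1, u, h1u, hN0⟩ := Finset.card_eq_two.mp (hdeg v0 hv0)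
  have hv1 : v1 ∈ A ∧ G.Adj v0 v1 := mem_filter.mp (hN0 ▸ (by simp))
  have hu : u ∈ A ∧ G.Adj v0 u := mem_filter.mp (hN0 ▸ (by simp))
  have hN0' : ∀ y ∈ A, G.Adj v0 y → y = v1 ∨ y = u :=
    nbrs_eq_pair (hdeg v0 hv0) hv1.1 hv1.2 hu.1 hu.2 h1u
  have hn1u : ¬G.Adj v1 u := hG.nbr hv1.2 hu.2
  -- v1's other neighbour v2
  obtain ⟨v2, hv2A, hadj12, hv2v0, hN1'⟩ := other_nbr (hdeg v1 hv1.1) hv0 hv1.2.symm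
  have d12 : v1 ≠ v2 := G.ne_of_adj hadj12
  have d2u : v2 ≠ u := fun h => hn1u (h ▸ hadj12)
  have n02 : ¬G.Adj v0 v2 := fun h => by
    rcases hN0' v2 hv2A h with h' | h'
    · exact d12 h'.symm
    · exact d2u h'
  -- v2's other neighbour v3
  obtain ⟨v3, hv3A, hadj23, hv3v1, hN2'⟩ := other_nbr (hdeg v2 hv2A) hv1.1 hadj12.symm
  have d23 : v2 ≠ v3 := G.ne_of_adj hadj23
  have d03 : v0 ≠ v3 := fun h => n02 (h ▸ hadj23).symm
  have d01 : v0 ≠ v1 := G.ne_of_adj hv1.2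
  have d0u : v0 ≠ u := G.ne_of_adj hu.2
  have d02 : v0 ≠ v2 := fun h => hv2v0 h.symm
  have d13 : v1 ≠ v3 := fun h => hv3v1 h.symm
  -- exclude v3 = u
  have d3u : v3 ≠ u := by
    intro h
    subst h
    -- 4-cycle v0 v1 v2 u; two leftover vertices have no possible neighbours
    have hNu' : ∀ y ∈ A, G.Adj v3 y → y = v0 ∨ y = v2 :=
      nbrs_eq_pair (hdeg v3 hv3A) hv0 hu.2.symm hv2A hadj23.symm d02
    have hfour : ({v0, v1, v2, v3} : Finset V).card = 4 := by
      rw [card_insert_of_notMem (by simp [d01, d02, d0u]),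
        card_insert_of_notMem (by simp [d12, h1u]),
        card_insert_of_notMem (by simp [d2u]), card_singleton]
    have hsub : ({v0, v1, v2, v3} : Finset V) ⊆ A := by
      intro y hy; simp only [mem_insert, mem_singleton] at hy
      rcases hy with rfl | rfl | rfl | rfl
      exacts [hv0, hv1.1, hv2A, hv3A]
    have hZ : (A \ {v0, v1, v2, v3}).card = 2 := by
      rw [Finset.card_sdiff_of_subset hsub, hfour, hA]
    obtain ⟨z1, z2, hz12, hZeq⟩ := Finset.card_eq_two.mp hZ
    have hz1 : z1 ∈ A \ {v0, v1, v2, v3} := hZeq ▸ (by simp)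
    have hz2 : z2 ∈ A \ {v0, v1, v2, v3} := hZeq ▸ (by simp)
    rw [mem_sdiff] at hz1 hz2
    simp only [mem_insert, mem_singleton, not_or] at hz1 hz2
    have hz1A := hz1.1
    have hz10 := hz1.2.1
    have hz11 := hz1.2.2.1
    have hz12' := hz1.2.2.2.1
    have hz1u := hz1.2.2.2.2
    -- z1's neighbour set is contained in {z2}
    have hsub1 : A.filter (fun y => G.Adj z1 y) ⊆ {z2} := by
      intro y hy
      rw [mem_filter] at hy
      obtain ⟨hyA, hyadj⟩ := hy
      have hy6 : y ∈ A \ {v0, v1, v2, v3} ∨ y ∈ ({v0, v1, v2, v3} : Finset V) := by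
        by_cases hp : y ∈ ({v0, v1, v2, v3} : Finset V)
        · exact Or.inr hp
        · exact Or.inl (mem_sdiff.mpr ⟨hyA, hp⟩)
      rcases hy6 with hy' | hy'
      · rw [hZeq] at hy'
        simp only [mem_insert, mem_singleton] at hy'
        rcases hy' with rfl | rfl
        · exact absurd hyadj (G.irrefl)
        · simp
      · simp only [mem_insert, mem_singleton] at hy'
        rcases hy' with rfl | rfl | rfl | rfl
        · rcases hN0' z1 hz1A hyadj.symm with h' | h' <;> simp_all
        · rcases hN1' z1 hz1A hyadj.symm with h' | h' <;> simp_all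
        · rcases hN2' z1 hz1A hyadj.symm with h' | h' <;> simp_all
        · rcases hNu' z1 hz1A hyadj.symm with h' | h' <;> simp_all
    have := (Finset.card_le_card hsub1).trans_eq (Finset.card_singleton z2)
    rw [hdeg z1 hz1A] at this
    omega
  -- v3's other neighbour v4
  obtain ⟨v4, hv4A, hadj34, hv4v2, hN3'⟩ := other_nbr (hdeg v3 hv3A) hv2A hadj23.symm
  have d34 : v3 ≠ v4 := G.ne_of_adj hadj34
  have d14 : v1 ≠ v4 := by
    rintro rfl
    rcases hN1' v3 hv3A hadj34.symm with h' | h'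
    · exact d03 h'.symm
    · exact d23 h'.symm
  have d04 : v0 ≠ v4 := by
    rintro rfl
    rcases hN0' v3 hv3A hadj34.symm with h' | h'
    · exact d13 h'.symm
    · exact d3u h'
  have d24 : v2 ≠ v4 := fun h => hv4v2 h.symm
  -- exclude v4 = u
  have d4u : v4 ≠ u := by
    intro h
    subst h
    -- 5-cycle v0 v1 v2 v3 u; leftover vertex has no possible neighbours
    have hNu' : ∀ y ∈ A, G.Adj v4 y → y = v0 ∨ y = v3 :=
      nbrs_eq_pair (hdeg v4 hv4A) hv0 hu.2.symm hv3A hadj34.symm d03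
    have hfive : ({v0, v1, v2, v3, v4} : Finset V).card = 5 := by
      rw [card_insert_of_notMem (by simp [d01, d02, d03, d0u]),
        card_insert_of_notMem (by simp [d12, d13, h1u]),
        card_insert_of_notMem (by simp [d23, d2u]),
        card_insert_of_notMem (by simp [d3u]), card_singleton]
    have hsub : ({v0, v1, v2, v3, v4} : Finset V) ⊆ A := by
      intro y hy; simp only [mem_insert, mem_singleton] at hy
      rcases hy with rfl | rfl | rfl | rfl | rfl
      exacts [hv0, hv1.1, hv2A, hv3A, hv4A]
    have hZ : (A \ {v0, v1, v2, v3, v4}).card = 1 := by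
      rw [Finset.card_sdiff_of_subset hsub, hfive, hA]
    obtain ⟨z, hZeq⟩ := Finset.card_eq_one.mp hZ
    have hz : z ∈ A \ {v0, v1, v2, v3, v4} := hZeq ▸ (by simp)
    rw [mem_sdiff] at hz
    simp only [mem_insert, mem_singleton, not_or] at hz
    have hzA := hz.1
    have hz0 := hz.2.1
    have hz1' := hz.2.2.1
    have hz2' := hz.2.2.2.1
    have hz3' := hz.2.2.2.2.1
    have hzu := hz.2.2.2.2.2
    have : 0 < (A.filter (fun y => G.Adj z y)).card := by rw [hdeg z hzA]; omega
    obtain ⟨y, hy⟩ := Finset.card_pos.mp this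
    rw [mem_filter] at hy
    obtain ⟨hyA, hyadj⟩ := hy
    have hy6 : y = v0 ∨ y = v1 ∨ y = v2 ∨ y = v3 ∨ y = v4 ∨ y = z := by
      by_cases hp : y ∈ ({v0, v1, v2, v3, v4} : Finset V)
      · simp only [mem_insert, mem_singleton] at hp; tauto
      · have : y ∈ A \ {v0, v1, v2, v3, v4} := mem_sdiff.mpr ⟨hyA, hp⟩
        rw [hZeq, Finset.mem_singleton] at this; tauto
    rcases hy6 with rfl | rfl | rfl | rfl | rfl | rfl
    · rcases hN0' z hzA hyadj.symm with h' | h' <;> simp_all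
    · rcases hN1' z hzA hyadj.symm with h' | h' <;> simp_all
    · rcases hN2' z hzA hyadj.symm with h' | h' <;> simp_all
    · rcases hN3' z hzA hyadj.symm with h' | h' <;> simp_all
    · rcases hNu' z hzA hyadj.symm with h' | h' <;> simp_all
    · exact G.irrefl hyadj
  -- now all six are distinct; v4's other neighbour is u
  have hfix : ({v0, v1, v2, v3, v4, u} : Finset V).card = 6 := by
    rw [card_insert_of_notMem (by simp [d01, d02, d03, d04, d0u]),
      card_insert_of_notMem (by simp [d12, d13, d14, h1u]),
      card_insert_of_notMem (by simp [d23, d24, d2u]),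
      card_insert_of_notMem (by simp [d34, d3u]),
      card_insert_of_notMem (by simp [d4u]), card_singleton]
  have hsub6 : ({v0, v1, v2, v3, v4, u} : Finset V) ⊆ A := by
    intro y hy; simp only [mem_insert, mem_singleton] at hy
    rcases hy with rfl | rfl | rfl | rfl | rfl | rfl
    exacts [hv0, hv1.1, hv2A, hv3A, hv4A, hu.1]
  have hAeq : A = {v0, v1, v2, v3, v4, u} :=
    (Finset.eq_of_subset_of_card_le hsub6 (by rw [hA, hfix])).symm
  obtain ⟨w, hwA, hadj4w, hwv3, hN4'⟩ := other_nbr (hdeg v4 hv4A) hv3A hadj34.symm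
  have hadj4u : G.Adj v4 u := by
    have hw6 : w = v0 ∨ w = v1 ∨ w = v2 ∨ w = v3 ∨ w = v4 ∨ w = u := by
      rw [hAeq] at hwA; simp only [mem_insert, mem_singleton] at hwA; tauto
    rcases hw6 with rfl | rfl | rfl | rfl | rfl | rfl
    · rcases hN0' v4 hv4A hadj4w.symm with h' | h' <;> simp_all
    · rcases hN1' v4 hv4A hadj4w.symm with h' | h' <;> simp_all
    · rcases hN2' v4 hv4A hadj4w.symm with h' | h' <;> simp_all
    · simp_all
    · exact absurd hadj4w (G.irrefl)
    · exact hadj4w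
  have hNu' : ∀ y ∈ A, G.Adj u y → y = v0 ∨ y = v4 :=
    nbrs_eq_pair (hdeg u hu.1) hv0 hu.2.symm hv4A hadj4u.symm d04
  -- all non-adjacency facts
  have n03 : ¬G.Adj v0 v3 := fun h => by rcases hN0' v3 hv3A h with h' | h' <;> simp_all
  have n04 : ¬G.Adj v0 v4 := fun h => by rcases hN0' v4 hv4A h with h' | h' <;> simp_all
  have n13 : ¬G.Adj v1 v3 := fun h => by rcases hN1' v3 hv3A h with h' | h' <;> simp_all
  have n14 : ¬G.Adj v1 v4 := fun h => by rcases hN1' v4 hv4A h with h' | h' <;> simp_all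
  have n24 : ¬G.Adj v2 v4 := fun h => by rcases hN2' v4 hv4A h with h' | h' <;> simp_all
  have n2u : ¬G.Adj v2 u := fun h => by rcases hNu' v2 hv2A h.symm with h' | h' <;> simp_all
  have n3u : ¬G.Adj v3 u := fun h => by rcases hN3' u hu.1 h with h' | h' <;> simp_all
  -- the 2-colouring
  refine ⟨fun x => if x = v0 ∨ x = v2 ∨ x = v4 then 0 else 1, ?_, ?_⟩
  · intro x
    by_cases h : (x = v0 ∨ x = v2 ∨ x = v4) <;> simp +decide [h]
  · intro x hx y hy hadj
    have hx6 : x = v0 ∨ x = v1 ∨ x = v2 ∨ x = v3 ∨ x = v4 ∨ x = u := by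
      rw [hAeq] at hx; simp only [mem_insert, mem_singleton] at hx; tauto
    have hy6 : y = v0 ∨ y = v1 ∨ y = v2 ∨ y = v3 ∨ y = v4 ∨ y = u := by
      rw [hAeq] at hy; simp only [mem_insert, mem_singleton] at hy; tauto
    rcases hx6 with rfl | rfl | rfl | rfl | rfl | rfl <;>
      rcases hy6 with rfl | rfl | rfl | rfl | rfl | rfl <;>
      first
        | exact absurd hadj (G.irrefl)
        | exact absurd hadj n02 | exact absurd hadj.symm n02
        | exact absurd hadj n03 | exact absurd hadj.symm n03
        | exact absurd hadj n04 | exact absurd hadj.symm n04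
        | exact absurd hadj n13 | exact absurd hadj.symm n13
        | exact absurd hadj n14 | exact absurd hadj.symm n14
        | exact absurd hadj hn1u | exact absurd hadj.symm hn1u
        | exact absurd hadj n24 | exact absurd hadj.symm n24
        | exact absurd hadj n2u | exact absurd hadj.symm n2u
        | exact absurd hadj n3u | exact absurd hadj.symm n3u
        | simp +decide [d01, d02, d03, d04, d0u, d12, d13, d14, h1u, d23, d24, d2u, d34,
            d3u, d4u, Ne.symm d01, Ne.symm d02, Ne.symm d03, Ne.symm d04, Ne.symm d0u,
            Ne.symm d12, Ne.symm d13, Ne.symm d14, Ne.symm h1u, Ne.symm d23, Ne.symm d24,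
            Ne.symm d2u, Ne.symm d34, Ne.symm d3u, Ne.symm d4u]

lemma twocol_of_big_deg (hG : TF G) {A : Finset V} {u : V} (hu : u ∈ A)
    (hbig : A.card ≤ (A.filter (fun y => G.Adj u y)).card + 2) : TwoCol G A := by
  refine ⟨fun x => if G.Adj u x then 1 else 0, by intro x; dsimp only; split <;> decide, ?_⟩
  intro a ha b hb hadj
  by_cases hua : G.Adj u a <;> by_cases hub : G.Adj u b
  · exact absurd hadj (hG.nbr hua hub)
  · simp [hua, hub]
  · simp [hua, hub]
  · -- both in A \ N(u), together with u: at most 2 elements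
    exfalso
    have hRcard : (A \ A.filter (fun y => G.Adj u y)).card ≤ 2 := by
      rw [Finset.card_sdiff_of_subset (Finset.filter_subset _ _)]
      omega
    have hmem : ∀ x, x ∈ A → ¬G.Adj u x → x ∈ A \ A.filter (fun y => G.Adj u y) := by
      intro x hx hnx; rw [mem_sdiff, mem_filter]; tauto
    have hab : a ≠ b := G.ne_of_adj hadj
    have hau : a ≠ u := fun h => hub (h ▸ hadj)
    have hbu : b ≠ u := fun h => hua (h ▸ hadj.symm)
    have hsub : ({u, a, b} : Finset V) ⊆ A \ A.filter (fun y => G.Adj u y) := by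
      intro y hy; simp only [mem_insert, mem_singleton] at hy
      rcases hy with h | h | h <;> rw [h]
      · exact hmem u hu (G.irrefl)
      · exact hmem a ha hua
      · exact hmem b hb hub
    have h3 : ({u, a, b} : Finset V).card = 3 := by
      rw [card_insert_of_notMem (by simp [Ne.symm hau, Ne.symm hbu]),
        card_insert_of_notMem (by simp [hab]), card_singleton]
    have := Finset.card_le_card hsub
    omega

/-- 6 vertices, min degree 2, some vertex of degree exactly 3: 2-colourable or C5. -/

lemma six_deg3 (hG : TF G) {A : Finset V} (hA : A.card = 6)
    (hdeg : ∀ x ∈ A, 2 ≤ (A.filter (fun y => G.Adj x y)).card)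
    {u : V} (hu : u ∈ A) (hu3 : (A.filter (fun y => G.Adj u y)).card = 3) :
    TwoCol G A ∨ HasC5 G A := by
  set Nu := A.filter (fun y => G.Adj u y) with hNu
  have hNusub : Nu ⊆ A := Finset.filter_subset _ _
  have huNu : u ∉ Nu := fun h => G.irrefl (mem_filter.mp h).2
  have hR : (A \ insert u Nu).card = 2 := by
    rw [Finset.card_sdiff_of_subset (by
      intro y hy; rcases Finset.mem_insert.mp hy with rfl | hy
      exacts [hu, hNusub hy]), Finset.card_insert_of_notMem huNu, hA, hu3]
  obtain ⟨z1, z2, hz12, hZeq⟩ := Finset.card_eq_two.mp hR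
  have hz1 : z1 ∈ A \ insert u Nu := hZeq ▸ (by simp)
  have hz2 : z2 ∈ A \ insert u Nu := hZeq ▸ (by simp)
  rw [mem_sdiff, Finset.mem_insert] at hz1 hz2
  push_neg at hz1 hz2
  have hz1A := hz1.1; have hz1u := hz1.2.1; have hz1N := hz1.2.2
  have hz2A := hz2.1; have hz2u := hz2.2.1; have hz2N := hz2.2.2
  have hnz1 : ¬G.Adj u z1 := fun h => hz1N (mem_filter.mpr ⟨hz1A, h⟩)
  have hnz2 : ¬G.Adj u z2 := fun h => hz2N (mem_filter.mpr ⟨hz2A, h⟩)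
  by_cases hzz : G.Adj z1 z2
  · -- build a C5 : u - x - z1 - z2 - y - u
    right
    -- z1 has a neighbour besides z2, which must lie in Nu
    have hx : ∃ x ∈ Nu, G.Adj z1 x := by
      have h2 : 2 ≤ (A.filter (G.Adj z1)).card := hdeg z1 hz1A
      have hone : ((A.filter (fun y => G.Adj z1 y)).erase z2).Nonempty := by
        rw [← Finset.card_pos, Finset.card_erase_of_mem (mem_filter.mpr ⟨hz2A, hzz⟩)]
        omega
      obtain ⟨x, hx⟩ := hone
      have hxz2 := Finset.ne_of_mem_erase hx
      have hx' := Finset.mem_of_mem_erase hx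
      rw [mem_filter] at hx'
      refine ⟨x, ?_, hx'.2⟩
      -- x ∈ A, x ≠ u (since ¬Adj u z1 ... symm), x ∉ {z1, z2} so x ∈ insert u Nu minus u
      have hxu : x ≠ u := fun h => hnz1 (h ▸ hx'.2).symm
      have hxz1 : x ≠ z1 := fun h => G.irrefl (h ▸ hx'.2)
      by_contra hxN
      have : x ∈ A \ insert u Nu := by
        rw [mem_sdiff, Finset.mem_insert]; push_neg; exact ⟨hx'.1, hxu, hxN⟩
      rw [hZeq] at this
      simp only [mem_insert, mem_singleton] at this
      rcases this with rfl | rfl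
      · exact hxz1 rfl
      · exact hxz2 rfl
    obtain ⟨x, hxNu, hadjz1x⟩ := hx
    have hy : ∃ y ∈ Nu, G.Adj z2 y := by
      have h2 : 2 ≤ (A.filter (G.Adj z2)).card := hdeg z2 hz2A
      have hone : ((A.filter (fun y => G.Adj z2 y)).erase z1).Nonempty := by
        rw [← Finset.card_pos, Finset.card_erase_of_mem (mem_filter.mpr ⟨hz1A, hzz.symm⟩)]
        omega
      obtain ⟨y, hy⟩ := hone
      have hyz1 := Finset.ne_of_mem_erase hy
      have hy' := Finset.mem_of_mem_erase hy
      rw [mem_filter] at hy'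
      refine ⟨y, ?_, hy'.2⟩
      have hyu : y ≠ u := fun h => hnz2 (h ▸ hy'.2).symm
      have hyz2 : y ≠ z2 := fun h => G.irrefl (h ▸ hy'.2)
      by_contra hyN
      have : y ∈ A \ insert u Nu := by
        rw [mem_sdiff, Finset.mem_insert]; push_neg; exact ⟨hy'.1, hyu, hyN⟩
      rw [hZeq] at this
      simp only [mem_insert, mem_singleton] at this
      rcases this with rfl | rfl
      · exact hyz1 rfl
      · exact hyz2 rfl
    obtain ⟨y, hyNu, hadjz2y⟩ := hy
    rw [hNu, mem_filter] at hxNu hyNu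
    have hxy : x ≠ y := by
      rintro rfl
      exact hG z1 z2 x hzz hadjz2y hadjz1x
    -- distinctness
    have duX : u ≠ x := G.ne_of_adj hxNu.2
    have duY : u ≠ y := G.ne_of_adj hyNu.2
    have duZ1 : u ≠ z1 := fun h => hz1u h.symm
    have duZ2 : u ≠ z2 := fun h => hz2u h.symm
    have dxz1 : x ≠ z1 := G.ne_of_adj hadjz1x.symm
    have dxz2 : x ≠ z2 := by
      rintro rfl; exact hnz2 hxNu.2
    have dyz1 : y ≠ z1 := by
      rintro rfl; exact hnz1 hyNu.2
    have dyz2 : y ≠ z2 := G.ne_of_adj hadjz2y.symm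
    -- cycle u x z1 z2 y
    have hall : ∀ i : ZMod 5, i = 0 ∨ i = 1 ∨ i = 2 ∨ i = 3 ∨ i = 4 := by decide
    refine ⟨fun i => if i = 0 then u else if i = 1 then x else if i = 2 then z1
      else if i = 3 then z2 else y, ?_, ?_, ?_⟩
    · intro i j h
      rcases hall i with rfl | rfl | rfl | rfl | rfl <;>
        rcases hall j with rfl | rfl | rfl | rfl | rfl <;>
        first
        | rfl
        | (simp +decide only [] at h
           first
           | exact absurd h duX | exact absurd h.symm duX
           | exact absurd h duY | exact absurd h.symm duY
           | exact absurd h duZ1 | exact absurd h.symm duZ1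
           | exact absurd h duZ2 | exact absurd h.symm duZ2
           | exact absurd h hxy | exact absurd h.symm hxy
           | exact absurd h dxz1 | exact absurd h.symm dxz1
           | exact absurd h dxz2 | exact absurd h.symm dxz2
           | exact absurd h dyz1 | exact absurd h.symm dyz1
           | exact absurd h dyz2 | exact absurd h.symm dyz2
           | exact absurd h hz12 | exact absurd h.symm hz12)
    · intro i
      rcases hall i with rfl | rfl | rfl | rfl | rfl <;>
        simp +decide only [] <;>
        first | exact hu | exact hxNu.1 | exact hz1A | exact hz2A | exact hyNu.1
    · intro i
      rcases hall i with rfl | rfl | rfl | rfl | rfl <;>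
        simp +decide only [] <;>
        first | exact hxNu.2 | exact hadjz1x.symm | exact hzz | exact hadjz2y | exact hyNu.2.symm
  · -- 2-colouring
    left
    refine ⟨fun x => if G.Adj u x then 1 else 0, by intro x; dsimp only; split <;> decide, ?_⟩
    intro a ha b hb hadj
    by_cases hua : G.Adj u a <;> by_cases hub : G.Adj u b
    · exact absurd hadj (hG.nbr hua hub)
    · simp [hua, hub]
    · simp [hua, hub]
    · exfalso
      -- both a b in A \ insert u Nu ∪ {u}; adjacency impossible
      have key : ∀ c, c ∈ A → ¬G.Adj u c → c = u ∨ c = z1 ∨ c = z2 := by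
        intro c hc hnc
        by_cases hcu : c = u
        · exact Or.inl hcu
        · have : c ∈ A \ insert u Nu := by
            rw [mem_sdiff, Finset.mem_insert]
            push_neg
            exact ⟨hc, hcu, fun h => hnc (mem_filter.mp h).2⟩
          rw [hZeq] at this
          simp only [mem_insert, mem_singleton] at this
          tauto
      rcases key a ha hua with rfl | rfl | rfl <;> rcases key b hb hub with rfl | rfl | rfl <;>
        first
        | exact G.irrefl hadj
        | exact hua hadj.symm
        | exact hub hadj
        | exact hzz hadj
        | exact hzz hadj.symm

lemma twocol_or_c5 (hG : TF G) :
    ∀ (n : ℕ) (A : Finset V), A.card ≤ n → n ≤ 6 → TwoCol G A ∨ HasC5 G A := by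
  intro n
  induction n with
  | zero =>
    intro A hA _
    left
    have : A = ∅ := Finset.card_eq_zero.mp (Nat.le_zero.mp hA)
    subst this
    refine ⟨fun _ => (0 : Fin 3), fun x => ?_, fun u hu => absurd hu (Finset.notMem_empty u)⟩
    show (0 : Fin 3) ≠ 2
    decide
  | succ n ih =>
    intro A hA hn6
    by_cases hlow : ∃ v ∈ A, (A.filter (fun y => G.Adj v y)).card ≤ 1
    · obtain ⟨v, hv, hdv⟩ := hlow
      have hcard : (A.erase v).card ≤ n := by
        rw [Finset.card_erase_of_mem hv]; omega
      rcases ih (A.erase v) hcard (by omega) with ⟨f, hf2, hfp⟩ | hC5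
      · left
        set N := (A.erase v).filter (fun y => G.Adj v y) with hN
        set c : Fin 3 := if 0 ∈ N.image f then 1 else 0 with hc
        have hc2 : c ≠ 2 := by rw [hc]; split <;> decide
        have hkey : ∀ w, w ∈ N → c ≠ f w := by
          intro w hw
          have hNcard : N.card ≤ 1 := by
            have : N ⊆ A.filter (fun y => G.Adj v y) := by
              intro y hy; rw [hN, mem_filter] at hy
              exact mem_filter.mpr ⟨Finset.mem_of_mem_erase hy.1, hy.2⟩
            exact (Finset.card_le_card this).trans hdv
          have hNeq : N = {w} := by
            apply Finset.eq_of_subset_of_card_le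
            · intro y hy
              rw [Finset.mem_singleton]
              exact Finset.card_le_one.mp hNcard y hy w hw
            · rw [Finset.card_singleton]
              exact Finset.card_pos.mpr ⟨w, hw⟩
          rcases (by omega : f w = 0 ∨ f w = 1 ∨ f w = 2) with h0 | h0 | h0
          · have : (0 : Fin 3) ∈ N.image f := Finset.mem_image.mpr ⟨w, hw, h0⟩
            rw [hc, if_pos this, h0]; decide
          · have : (0 : Fin 3) ∉ N.image f := by
              rw [hNeq]
              simp only [Finset.image_singleton, Finset.mem_singleton, h0]
              decide
            rw [hc, if_neg this, h0]; decide
          · exact absurd h0 (hf2 w)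
        refine ⟨Function.update f v c, ?_, ?_⟩
        · intro x
          by_cases hx : x = v
          · rw [hx, Function.update_self]; exact hc2
          · rw [Function.update_of_ne hx]; exact hf2 x
        · intro a ha b hb hadj
          by_cases hav : a = v <;> by_cases hbv : b = v
          · rw [hav, hbv] at hadj; exact absurd hadj (G.irrefl)
          · subst hav
            rw [Function.update_self, Function.update_of_ne hbv]
            exact hkey b (mem_filter.mpr ⟨Finset.mem_erase.mpr ⟨hbv, hb⟩, hadj⟩)
          · subst hbv
            rw [Function.update_self, Function.update_of_ne hav]
            exact (hkey a (mem_filter.mpr ⟨Finset.mem_erase.mpr ⟨hav, ha⟩, hadj.symm⟩)).symm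
          · rw [Function.update_of_ne hav, Function.update_of_ne hbv]
            exact hfp a (Finset.mem_erase.mpr ⟨hav, ha⟩) b (Finset.mem_erase.mpr ⟨hbv, hb⟩) hadj
      · right
        obtain ⟨w, hinj, hmem, hadjc⟩ := hC5
        exact ⟨w, hinj, fun i => Finset.mem_of_mem_erase (hmem i), hadjc⟩
    · push_neg at hlow
      rcases A.eq_empty_or_nonempty with rfl | ⟨u, hu⟩
      · left
        refine ⟨fun _ => (0 : Fin 3), fun x => ?_, fun u hu => absurd hu (Finset.notMem_empty u)⟩
        show (0 : Fin 3) ≠ 2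
        decide
      by_cases hbig : ∃ w ∈ A, A.card ≤ (A.filter (fun y => G.Adj w y)).card + 2
      · obtain ⟨w, hw, hbig⟩ := hbig
        exact Or.inl (twocol_of_big_deg hG hw hbig)
      · push_neg at hbig
        have hA5 : 5 ≤ A.card := by
          have h1 := hlow u hu
          have h2 := hbig u hu
          omega
        have hA6 : A.card ≤ 6 := by omega
        have hdegs : ∀ x ∈ A, 2 ≤ (A.filter (fun y => G.Adj x y)).card ∧
            (A.filter (fun y => G.Adj x y)).card + 3 ≤ A.card := by
          intro x hx
          exact ⟨hlow x hx, by have := hbig x hx; omega⟩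
        rcases (by omega : A.card = 5 ∨ A.card = 6) with h5 | h6
        · right
          apply c5_walk hG h5
          intro x hx
          have := hdegs x hx
          omega
        · by_cases h3 : ∃ x ∈ A, (A.filter (fun y => G.Adj x y)).card = 3
          · obtain ⟨x, hx, hx3⟩ := h3
            exact six_deg3 hG h6 (fun y hy => (hdegs y hy).1) hx hx3
          · push_neg at h3
            left
            apply c6_twocol hG h6
            intro x hx
            have h1 := (hdegs x hx).1
            have h2 := (hdegs x hx).2
            have h4 := h3 x hx
            omega

lemma key (hG : TF G) : ∀ (n : ℕ) (s : Finset V), s.card ≤ n → s.card ≤ 10 →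
    ∃ f : V → Fin 3, ∀ u ∈ s, ∀ w ∈ s, G.Adj u w → f u ≠ f w := by
  intro n
  induction n with
  | zero =>
    intro s hs _
    have : s = ∅ := Finset.card_eq_zero.mp (Nat.le_zero.mp hs)
    subst this
    exact ⟨fun _ => (0 : Fin 3), fun u hu => absurd hu (Finset.notMem_empty u)⟩
  | succ n ih =>
    intro s hs hs10
    -- Case A: a vertex of degree ≤ 2 inside s
    by_cases hlow : ∃ v ∈ s, (s.filter (fun y => G.Adj v y)).card ≤ 2
    · obtain ⟨v, hv, hdv⟩ := hlow
      have hcard : (s.erase v).card ≤ n := by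
        rw [Finset.card_erase_of_mem hv]; omega
      have hcard10 : (s.erase v).card ≤ 10 := by
        rw [Finset.card_erase_of_mem hv]; omega
      obtain ⟨f, hfp⟩ := ih (s.erase v) hcard hcard10
      set N := (s.erase v).filter (fun y => G.Adj v y) with hN
      have hNsub : N ⊆ s.filter (fun y => G.Adj v y) := by
        intro y hy; rw [hN, mem_filter] at hy
        exact mem_filter.mpr ⟨Finset.mem_of_mem_erase hy.1, hy.2⟩
      have hCcard : (N.image f).card ≤ 2 :=
        le_trans (Finset.card_image_le) (le_trans (Finset.card_le_card hNsub) hdv)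
      have hex : ((Finset.univ : Finset (Fin 3)) \ N.image f).Nonempty := by
        rw [← Finset.card_pos, Finset.card_sdiff_of_subset (Finset.subset_univ _)]
        have : (Finset.univ : Finset (Fin 3)).card = 3 := by decide
        omega
      obtain ⟨c, hc⟩ := hex
      rw [Finset.mem_sdiff] at hc
      have hkey : ∀ y ∈ N, c ≠ f y := by
        intro y hy he
        exact hc.2 (Finset.mem_image.mpr ⟨y, hy, he.symm⟩)
      refine ⟨Function.update f v c, ?_⟩
      intro a ha b hb hadj
      by_cases hav : a = v <;> by_cases hbv : b = v
      · rw [hav, hbv] at hadj; exact absurd hadj (G.irrefl)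
      · subst hav
        rw [Function.update_self, Function.update_of_ne hbv]
        exact hkey b (mem_filter.mpr ⟨Finset.mem_erase.mpr ⟨hbv, hb⟩, hadj⟩)
      · subst hbv
        rw [Function.update_self, Function.update_of_ne hav]
        exact (hkey a (mem_filter.mpr ⟨Finset.mem_erase.mpr ⟨hav, ha⟩, hadj.symm⟩)).symm
      · rw [Function.update_of_ne hav, Function.update_of_ne hbv]
        exact hfp a (Finset.mem_erase.mpr ⟨hav, ha⟩) b (Finset.mem_erase.mpr ⟨hbv, hb⟩) hadj
    · push_neg at hlow
      rcases s.eq_empty_or_nonempty with rfl | ⟨v, hv⟩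
      · exact ⟨fun _ => (0 : Fin 3), fun u hu => absurd hu (Finset.notMem_empty u)⟩
      -- Step 1: an independent set S₀ with s.card ≤ S₀.card + 6
      have hS0 : ∃ S₀ : Finset V, S₀ ⊆ s ∧ (∀ x ∈ S₀, ∀ y ∈ S₀, ¬G.Adj x y) ∧
          s.card ≤ S₀.card + 6 := by
        by_cases h4 : ∃ u ∈ s, 4 ≤ (s.filter (fun y => G.Adj u y)).card
        · obtain ⟨u, hu, hu4⟩ := h4
          obtain ⟨t, ht, htc⟩ := Finset.exists_subset_card_eq hu4
          refine ⟨t, ?_, ?_, by omega⟩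
          · intro y hy; exact (mem_filter.mp (ht hy)).1
          · intro x hx y hy
            exact hG.nbr (mem_filter.mp (ht hx)).2 (mem_filter.mp (ht hy)).2
        · push_neg at h4
          by_cases h9 : s.card ≤ 9
          · refine ⟨s.filter (fun y => G.Adj v y), Finset.filter_subset _ _, ?_, ?_⟩
            · intro x hx y hy
              exact hG.nbr (mem_filter.mp hx).2 (mem_filter.mp hy).2
            · have := hlow v hv
              omega
          · -- s.card = 10, all degrees exactly 3
            have hs10' : s.card = 10 := by omega
            set Nv := s.filter (fun y => G.Adj v y) with hNv
            have hNv3 : Nv.card = 3 := by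
              rw [hNv]
              have h1 := hlow v hv
              have h2 := h4 v hv
              omega
            have hvNv : v ∉ Nv := fun h => G.irrefl (mem_filter.mp h).2
            have hB : 6 ≤ (s \ insert v Nv).card := by
              have hsub : insert v Nv ⊆ s := by
                intro y hy; rcases Finset.mem_insert.mp hy with rfl | hy
                exacts [hv, (mem_filter.mp hy).1]
              rw [Finset.card_sdiff_of_subset hsub, Finset.card_insert_of_notMem hvNv, hNv3, hs10']
            obtain ⟨x, hx, y, hy, z, hz, hxy, hxz, hyz, nxy, nxz, nyz⟩ :=
              R33 hG (s \ insert v Nv) hB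
            have hmem : ∀ a, a ∈ s \ insert v Nv → a ∈ s ∧ a ≠ v ∧ ¬G.Adj v a := by
              intro a ha
              rw [mem_sdiff, Finset.mem_insert] at ha
              push_neg at ha
              exact ⟨ha.1, ha.2.1, fun h => ha.2.2 (mem_filter.mpr ⟨ha.1, h⟩)⟩
            obtain ⟨hxs, hxv, hnvx⟩ := hmem x hx
            obtain ⟨hys, hyv, hnvy⟩ := hmem y hy
            obtain ⟨hzs, hzv, hnvz⟩ := hmem z hz
            refine ⟨{v, x, y, z}, ?_, ?_, ?_⟩
            · intro a ha; simp only [mem_insert, mem_singleton] at ha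
              rcases ha with h | h | h | h <;> rw [h]
              exacts [hv, hxs, hys, hzs]
            · intro a ha b hb
              simp only [mem_insert, mem_singleton] at ha hb
              rcases ha with h | h | h | h <;> rcases hb with h' | h' | h' | h' <;>
                rw [h, h'] <;>
                first
                  | exact G.irrefl
                  | exact hnvx | exact hnvy | exact hnvz
                  | exact fun hh => hnvx hh.symm | exact fun hh => hnvy hh.symm
                  | exact fun hh => hnvz hh.symm
                  | exact nxy | exact nxz | exact nyz
                  | exact fun hh => nxy hh.symm | exact fun hh => nxz hh.symm
                  | exact fun hh => nyz hh.symm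
            · have hc4 : ({v, x, y, z} : Finset V).card = 4 := by
                rw [card_insert_of_notMem (by simp [Ne.symm hxv, Ne.symm hyv, Ne.symm hzv]),
                  card_insert_of_notMem (by simp [hxy, hxz]),
                  card_insert_of_notMem (by simp [hyz]), card_singleton]
              omega
      obtain ⟨S₀, hS₀s, hS₀ind, hS₀req⟩ := hS0
      -- Step 2: maximal independent set S containing S₀
      have hSS : ∃ S ∈ (s.powerset.filter
          (fun B => S₀ ⊆ B ∧ ∀ x ∈ B, ∀ y ∈ B, ¬G.Adj x y)),
          ∀ B ∈ (s.powerset.filter (fun B => S₀ ⊆ B ∧ ∀ x ∈ B, ∀ y ∈ B, ¬G.Adj x y)),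
            B.card ≤ S.card := by
        apply Finset.exists_max_image
        exact ⟨S₀, mem_filter.mpr ⟨Finset.mem_powerset.mpr hS₀s, le_refl S₀, hS₀ind⟩⟩
      obtain ⟨S, hSmem, hSmax⟩ := hSS
      rw [mem_filter, Finset.mem_powerset] at hSmem
      obtain ⟨hSs, hS₀S, hSind⟩ := hSmem
      have hSdom : ∀ x ∈ s, x ∉ S → ∃ y ∈ S, G.Adj x y := by
        intro x hx hxS
        by_contra hno
        push_neg at hno
        have hmem : insert x S ∈ s.powerset.filter
            (fun B => S₀ ⊆ B ∧ ∀ x ∈ B, ∀ y ∈ B, ¬G.Adj x y) := by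
          rw [mem_filter, Finset.mem_powerset]
          refine ⟨?_, ?_, ?_⟩
          · intro y hy; rcases Finset.mem_insert.mp hy with rfl | hy
            exacts [hx, hSs hy]
          · exact hS₀S.trans (Finset.subset_insert x S)
          · intro a ha b hb
            rcases Finset.mem_insert.mp ha with h1 | h1
            · rcases Finset.mem_insert.mp hb with h2 | h2
              · rw [h1, h2]; exact G.irrefl
              · rw [h1]; exact hno b h2
            · rcases Finset.mem_insert.mp hb with h2 | h2
              · rw [h2]; exact fun h => hno a h1 h.symm
              · exact hSind a h1 b h2
        have := hSmax _ hmem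
        rw [Finset.card_insert_of_notMem hxS] at this
        omega
      set T := s \ S with hT
      have hTcard : T.card + S.card = s.card := by
        rw [hT, Finset.card_sdiff_of_subset hSs]
        have := Finset.card_le_card hSs
        omega
      have hT6 : T.card ≤ 6 := by
        have h1 : S₀.card ≤ S.card := Finset.card_le_card hS₀S
        omega
      have hTs : T ⊆ s := Finset.sdiff_subset
      -- neighbours of S-vertices lie in T
      have hSnbrT : ∀ x ∈ S, ∀ y ∈ s, G.Adj x y → y ∈ T := by
        intro x hx y hy hadj
        rw [hT, mem_sdiff]
        exact ⟨hy, fun hyS => hSind x hx y hyS hadj⟩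
      rcases twocol_or_c5 hG 6 T hT6 (le_refl 6) with ⟨g, hg2, hgp⟩ | hC5
      · -- colour S with 2, T with g
        refine ⟨fun x => if x ∈ S then 2 else g x, ?_⟩
        intro a ha b hb hadj
        by_cases haS : a ∈ S <;> by_cases hbS : b ∈ S <;> simp only [haS, hbS, if_pos, if_neg,
          if_true, if_false]
        · exact absurd hadj (hSind a haS b hbS)
        · exact (hg2 b).symm
        · exact hg2 a
        · exact hgp a (mem_sdiff.mpr ⟨ha, haS⟩) b (mem_sdiff.mpr ⟨hb, hbS⟩) hadj
      · -- the C5 case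
        obtain ⟨vC, hinj, hmemC, hadjC⟩ := hC5
        have hinduced := hasC5_induced hG hinj hadjC
        have hinj' : ∀ i j, vC i = vC j → i = j := fun i j h => hinj h
        set C := Finset.image vC Finset.univ with hC
        have hCT : C ⊆ T := by
          intro y hy
          rw [hC, Finset.mem_image] at hy
          obtain ⟨i, _, rfl⟩ := hy
          exact hmemC i
        have hCcard : C.card = 5 := by
          rw [hC, Finset.card_image_of_injective _ hinj]
          decide
        have hT5 : 5 ≤ T.card := hCcard ▸ Finset.card_le_card hCT
        -- ZMod 5 arithmetic facts
        have za : ∀ a : ZMod 5, a+1 ≠ a ∧ a+2 ≠ a ∧ a+3 ≠ a ∧ a+4 ≠ a ∧ a+2 ≠ a+1 ∧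
            a+2 ≠ a+3 ∧ a+3 ≠ a+1 ∧ a+4 ≠ a+1 ∧ a+4 ≠ a+3 := by decide
        have zb : ∀ a : ZMod 5, a+1+1 = a+2 ∧ a+2+1 = a+3 ∧ a+3+1 = a+4 ∧ a+4+1 = a ∧
            a+1+4 = a := by decide
        have zcover : ∀ i r : ZMod 5, i = r ∨ i = r+1 ∨ i = r+2 ∨ i = r+3 ∨ i = r+4 := by
          decide
        -- no vertex has 3 distinct neighbours on the C5
        have h3C : ∀ (x : V) (B : Finset V), B ⊆ C → 3 ≤ B.card →
            (∀ y ∈ B, G.Adj x y) → False := by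
          intro x B hBC hB3 hBadj
          obtain ⟨t, ht, htc⟩ := Finset.exists_subset_card_eq hB3
          obtain ⟨y1, y2, y3, h12, h13, h23, rfl⟩ := Finset.card_eq_three.mp htc
          have hy1 : y1 ∈ C := hBC (ht (by simp))
          have hy2 : y2 ∈ C := hBC (ht (by simp))
          have hy3 : y3 ∈ C := hBC (ht (by simp))
          rw [hC, Finset.mem_image] at hy1 hy2 hy3
          obtain ⟨i, -, hi⟩ := hy1
          obtain ⟨j, -, hj⟩ := hy2
          obtain ⟨k, -, hk⟩ := hy3
          have a1 : G.Adj x (vC i) := hi ▸ hBadj y1 (ht (by simp))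
          have a2 : G.Adj x (vC j) := hj ▸ hBadj y2 (ht (by simp))
          have a3 : G.Adj x (vC k) := hk ▸ hBadj y3 (ht (by simp))
          have dij : i ≠ j := fun h => h12 (hi ▸ hj ▸ h ▸ rfl)
          have dik : i ≠ k := fun h => h13 (hi ▸ hk ▸ h ▸ rfl)
          have djk : j ≠ k := fun h => h23 (hj ▸ hk ▸ h ▸ rfl)
          have tri : ∀ p q : ZMod 5, q = p + 1 → G.Adj x (vC p) → G.Adj x (vC q) → False :=
            fun p q hq hp1 hq1 => hG.nbr hp1 hq1 (hq ▸ hadjC p)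
          have hconsec : ∀ a b c : ZMod 5, a ≠ b → a ≠ c → b ≠ c →
              (b = a+1 ∨ c = a+1 ∨ a = b+1 ∨ c = b+1 ∨ a = c+1 ∨ b = c+1) := by decide
          rcases hconsec i j k dij dik djk with h | h | h | h | h | h
          exacts [tri i j h a1 a2, tri i k h a1 a3, tri j i h a2 a1,
            tri j k h a2 a3, tri k i h a3 a1, tri k j h a3 a2]
        have hSne : S.Nonempty := by
          rcases S.eq_empty_or_nonempty with h | h
          · exfalso
            obtain ⟨y, hy, -⟩ := hSdom v hv (by rw [h]; exact Finset.notMem_empty v)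
            rw [h] at hy
            exact Finset.notMem_empty y hy
          · exact h
        rcases (by omega : T.card = 5 ∨ T.card = 6) with h5 | h6
        · -- T = C5 exactly: impossible since S-vertices have 3 nbrs in T
          exfalso
          have hCeqT : C = T := Finset.eq_of_subset_of_card_le hCT (by omega)
          obtain ⟨x, hxS⟩ := hSne
          apply h3C x (s.filter (fun y => G.Adj x y))
          · intro y hy
            rw [mem_filter] at hy
            rw [hCeqT]
            exact hSnbrT x hxS y hy.1 hy.2
          · exact hlow x (hSs hxS)
          · intro y hy; exact (mem_filter.mp hy).2
        · -- T = C5 plus one extra vertex w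
          have hw1 : (T \ C).card = 1 := by
            rw [Finset.card_sdiff_of_subset hCT]; omega
          obtain ⟨w, hweq⟩ := Finset.card_eq_one.mp hw1
          have hwmem : w ∈ T \ C := hweq ▸ Finset.mem_singleton_self w
          rw [Finset.mem_sdiff] at hwmem
          obtain ⟨hwT, hwC⟩ := hwmem
          have hne_wC : ∀ i, vC i ≠ w := by
            intro i h
            exact hwC (h ▸ (by rw [hC]; exact Finset.mem_image_of_mem vC (Finset.mem_univ i)))
          have hclassT : ∀ y ∈ T, y = w ∨ ∃ i, y = vC i := by
            intro y hy
            by_cases hyC : y ∈ C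
            · rw [hC, Finset.mem_image] at hyC
              obtain ⟨i, -, hi⟩ := hyC
              exact Or.inr ⟨i, hi.symm⟩
            · have : y ∈ T \ C := Finset.mem_sdiff.mpr ⟨hy, hyC⟩
              rw [hweq, Finset.mem_singleton] at this
              exact Or.inl this
          have hST : ∀ x ∈ S, x ∉ T := by
            intro x hx hxT
            rw [hT, Finset.mem_sdiff] at hxT
            exact hxT.2 hx
          have hSw : ∀ x ∈ S, x ≠ w := fun x hx h => hST x hx (h ▸ hwT)
          have hSvC : ∀ x ∈ S, ∀ i, x ≠ vC i := fun x hx i h => hST x hx (h ▸ hmemC i)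
          -- every S-vertex is adjacent to w
          have hxw : ∀ x ∈ S, G.Adj x w := by
            intro x hx
            by_contra hnxw
            apply h3C x (s.filter (fun y => G.Adj x y))
            · intro y hy
              rw [mem_filter] at hy
              have hyT := hSnbrT x hx y hy.1 hy.2
              rcases hclassT y hyT with rfl | ⟨i, rfl⟩
              · exact absurd hy.2 hnxw
              · rw [hC]; exact Finset.mem_image_of_mem vC (Finset.mem_univ i)
            · exact hlow x (hSs hx)
            · intro y hy; exact (mem_filter.mp hy).2
          -- choose the rotation r
          obtain ⟨r, hrw, hrS⟩ : ∃ r : ZMod 5, ¬G.Adj w (vC r) ∧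
              ∀ x ∈ S, ¬(G.Adj x (vC (r+1)) ∧ G.Adj x (vC (r+4))) := by
            by_cases hW : ∃ k, G.Adj w (vC k)
            · obtain ⟨k, hk⟩ := hW
              refine ⟨k + 1, ?_, ?_⟩
              · intro h; exact hG.nbr hk h (hadjC k)
              · rintro x hxS ⟨h1, h2⟩
                rw [(zb k).2.2.2.2] at h2
                exact hG.nbr (hxw x hxS) h2 hk
            · push_neg at hW
              by_contra hcon
              push_neg at hcon
              have hcon' : ∀ r : ZMod 5, ∃ x ∈ S,
                  G.Adj x (vC (r+1)) ∧ G.Adj x (vC (r+4)) := by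
                intro r
                have h1 := hcon r (hW r)
                by_contra hq
                push_neg at hq
                obtain ⟨x, hx1, hx2⟩ := h1
                exact hq x hx1 hx2.1 hx2.2
              choose gg hg1 hg2 using hcon'
              have hginj : ∀ r r' : ZMod 5, r ≠ r' → gg r ≠ gg r' := by
                intro r r' hne he
                have zid : ∀ p q : ZMod 5, p ≠ q →
                    ((q+1 ≠ p+1 ∧ q+1 ≠ p+4) ∨ (q+4 ≠ p+1 ∧ q+4 ≠ p+4)) := by decide
                have hid := zid r r' hne
                have hx1 : G.Adj (gg r) (vC (r+1)) := (hg2 r).1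
                have hx2 : G.Adj (gg r) (vC (r+4)) := (hg2 r).2
                have d14 : (r+1 : ZMod 5) ≠ r+4 := by
                  have := (za r).2.2.2.2.2.2.2.1; exact fun h => this h.symm
                rcases hid with ⟨d1, d2⟩ | ⟨d1, d2⟩
                · have hx3 : G.Adj (gg r) (vC (r'+1)) := he ▸ (hg2 r').1
                  apply h3C (gg r) {vC (r+1), vC (r+4), vC (r'+1)}
                  · intro y hy
                    simp only [Finset.mem_insert, Finset.mem_singleton] at hy
                    rcases hy with h | h | h <;> rw [h, hC] <;>
                      exact Finset.mem_image_of_mem vC (Finset.mem_univ _)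
                  · rw [card_insert_of_notMem (by
                        simp only [Finset.mem_insert, Finset.mem_singleton, not_or]
                        exact ⟨fun h => d14 (hinj' _ _ h), fun h => d1 (hinj' _ _ h).symm⟩),
                      card_insert_of_notMem (by
                        simp only [Finset.mem_singleton]
                        exact fun h => d2 (hinj' _ _ h).symm), card_singleton]
                  · intro y hy
                    simp only [Finset.mem_insert, Finset.mem_singleton] at hy
                    rcases hy with h | h | h <;> rw [h]
                    exacts [hx1, hx2, hx3]
                · have hx3 : G.Adj (gg r) (vC (r'+4)) := he ▸ (hg2 r').2
                  apply h3C (gg r) {vC (r+1), vC (r+4), vC (r'+4)}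
                  · intro y hy
                    simp only [Finset.mem_insert, Finset.mem_singleton] at hy
                    rcases hy with h | h | h <;> rw [h, hC] <;>
                      exact Finset.mem_image_of_mem vC (Finset.mem_univ _)
                  · rw [card_insert_of_notMem (by
                        simp only [Finset.mem_insert, Finset.mem_singleton, not_or]
                        exact ⟨fun h => d14 (hinj' _ _ h), fun h => d1 (hinj' _ _ h).symm⟩),
                      card_insert_of_notMem (by
                        simp only [Finset.mem_singleton]
                        exact fun h => d2 (hinj' _ _ h).symm), card_singleton]
                  · intro y hy
                    simp only [Finset.mem_insert, Finset.mem_singleton] at hy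
                    rcases hy with h | h | h <;> rw [h]
                    exacts [hx1, hx2, hx3]
              have h5S : 5 ≤ S.card := by
                have hmapsto : ∀ r : ZMod 5, r ∈ (Finset.univ : Finset (ZMod 5)) → gg r ∈ S :=
                  fun r _ => hg1 r
                have hinjOn : Set.InjOn gg (Finset.univ : Finset (ZMod 5)) := by
                  intro r _ r' _ h
                  by_contra hne
                  exact hginj r r' hne h
                have := Finset.card_le_card_of_injOn gg hmapsto hinjOn
                have hu5 : (Finset.univ : Finset (ZMod 5)).card = 5 := by decide
                omega
              omega
          -- the colouring
          set f : V → Fin 3 := fun z => if z = w then 2 else if z = vC r then 2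
            else if z = vC (r+1) ∨ z = vC (r+3) then 0
            else if z = vC (r+2) ∨ z = vC (r+4) then 1
            else if G.Adj z (vC (r+1)) ∨ G.Adj z (vC (r+3)) then 1 else 0 with hfdef
          have fw : f w = 2 := by rw [hfdef]; exact if_pos rfl
          have fr : f (vC r) = 2 := by
            rw [hfdef]; exact (if_neg (hne_wC r)).trans (if_pos rfl)
          have f1 : f (vC (r+1)) = 0 := by
            rw [hfdef]
            exact (if_neg (hne_wC _)).trans
              (((if_neg (fun h => (za r).1 (hinj' _ _ h)))).trans (if_pos (Or.inl rfl)))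
          have f3 : f (vC (r+3)) = 0 := by
            rw [hfdef]
            exact (if_neg (hne_wC _)).trans
              (((if_neg (fun h => (za r).2.2.1 (hinj' _ _ h)))).trans (if_pos (Or.inr rfl)))
          have f2 : f (vC (r+2)) = 1 := by
            rw [hfdef]
            refine (if_neg (hne_wC _)).trans
              ((if_neg (fun h => (za r).2.1 (hinj' _ _ h))).trans
                ((if_neg ?_).trans (if_pos (Or.inl rfl))))
            rintro (h | h)
            · exact (za r).2.2.2.2.1 (hinj' _ _ h)
            · exact (za r).2.2.2.2.2.1 (hinj' _ _ h)
          have f4 : f (vC (r+4)) = 1 := by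
            rw [hfdef]
            refine (if_neg (hne_wC _)).trans
              ((if_neg (fun h => (za r).2.2.2.1 (hinj' _ _ h))).trans
                ((if_neg ?_).trans (if_pos (Or.inr rfl))))
            rintro (h | h)
            · exact (za r).2.2.2.2.2.2.2.1 (hinj' _ _ h)
            · exact (za r).2.2.2.2.2.2.2.2 (hinj' _ _ h)
          have fSdef : ∀ x ∈ S, f x = if G.Adj x (vC (r+1)) ∨ G.Adj x (vC (r+3))
              then 1 else 0 := by
            intro x hx
            rw [hfdef]
            refine (if_neg (hSw x hx)).trans ((if_neg (hSvC x hx r)).trans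
              ((if_neg ?_).trans (if_neg ?_)))
            · rintro (h | h)
              · exact hSvC x hx _ h
              · exact hSvC x hx _ h
            · rintro (h | h)
              · exact hSvC x hx _ h
              · exact hSvC x hx _ h
          -- triangle helpers
          have tri12 : ∀ x, G.Adj x (vC (r+1)) → G.Adj x (vC (r+2)) → False := by
            intro x h1 h2
            exact hG.nbr h1 h2 (by rw [← (zb r).1]; exact hadjC (r+1))
          have tri23 : ∀ x, G.Adj x (vC (r+2)) → G.Adj x (vC (r+3)) → False := by
            intro x h1 h2
            exact hG.nbr h1 h2 (by rw [← (zb r).2.1]; exact hadjC (r+2))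
          have tri34 : ∀ x, G.Adj x (vC (r+3)) → G.Adj x (vC (r+4)) → False := by
            intro x h1 h2
            exact hG.nbr h1 h2 (by rw [← (zb r).2.2.1]; exact hadjC (r+3))
          -- S vs C5 edge colouring
          have hSC : ∀ x ∈ S, ∀ i, G.Adj x (vC i) → f x ≠ f (vC i) := by
            intro x hx i hadj
            rcases zcover i r with heq | heq | heq | heq | heq <;> rw [heq] at hadj ⊢
            · rw [fr, fSdef x hx]
              split <;> decide
            · rw [f1, fSdef x hx, if_pos (Or.inl hadj)]; decide
            · rw [f2, fSdef x hx, if_neg (by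
                rintro (h | h)
                · exact tri12 x h hadj
                · exact tri23 x hadj h)]
              decide
            · rw [f3, fSdef x hx, if_pos (Or.inr hadj)]; decide
            · rw [f4, fSdef x hx, if_neg (by
                rintro (h | h)
                · exact hrS x hx ⟨h, hadj⟩
                · exact tri34 x h hadj)]
              decide
          have hSw2 : ∀ x ∈ S, f x ≠ f w := by
            intro x hx
            rw [fw, fSdef x hx]
            split <;> decide
          have hwCcol : ∀ i, G.Adj w (vC i) → f w ≠ f (vC i) := by
            intro i hadj
            rcases zcover i r with heq | heq | heq | heq | heq <;> rw [heq] at hadj ⊢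
            · exact absurd hadj hrw
            · rw [fw, f1]; decide
            · rw [fw, f2]; decide
            · rw [fw, f3]; decide
            · rw [fw, f4]; decide
          have hCCstep : ∀ i, f (vC i) ≠ f (vC (i+1)) := by
            intro i
            rcases zcover i r with heq | heq | heq | heq | heq <;> rw [heq]
            · rw [f1, fr]; decide
            · rw [(zb r).1, f1, f2]; decide
            · rw [(zb r).2.1, f2, f3]; decide
            · rw [(zb r).2.2.1, f3, f4]; decide
            · rw [(zb r).2.2.2.1, f4, fr]; decide
          have hCC : ∀ i j, G.Adj (vC i) (vC j) → f (vC i) ≠ f (vC j) := by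
            intro i j hadj
            rcases hinduced i j hadj with heq | heq
            · rw [heq]; exact hCCstep i
            · rw [heq]; exact (hCCstep j).symm
          -- final classification
          have hclass : ∀ y ∈ s, y ∈ S ∨ y = w ∨ ∃ i, y = vC i := by
            intro y hy
            by_cases hyS : y ∈ S
            · exact Or.inl hyS
            · have hyT : y ∈ T := by rw [hT, Finset.mem_sdiff]; exact ⟨hy, hyS⟩
              exact Or.inr (hclassT y hyT)
          refine ⟨f, ?_⟩
          intro a ha b hb hadj
          rcases hclass a ha with haS | haw | ⟨i, haC⟩ <;>
            rcases hclass b hb with hbS | hbw | ⟨j, hbC⟩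
          · exact absurd hadj (hSind a haS b hbS)
          · rw [hbw] at hadj ⊢; exact hSw2 a haS
          · rw [hbC] at hadj ⊢
            exact hSC a haS j hadj
          · rw [haw] at hadj ⊢
            exact (hSw2 b hbS).symm
          · rw [haw, hbw] at hadj; exact absurd hadj (G.irrefl)
          · rw [haw] at hadj ⊢
            rw [hbC] at hadj ⊢
            exact hwCcol j hadj
          · rw [haC] at hadj ⊢
            exact (hSC b hbS i hadj.symm).symm
          · rw [haC] at hadj ⊢
            rw [hbw] at hadj ⊢
            exact (hwCcol i hadj.symm).symm
          · rw [haC, hbC] at hadj ⊢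
            exact hCC i j hadj

end Chv

theorem statement_4 {V : Type} [Fintype V] (G : SimpleGraph V)
    (hf : G.cliqueNum + 2 ≤ chi G) (hchi : chi G = 4) :
    11 ≤ Fintype.card V := by
  classical
  by_contra h
  push_neg at h
  have h2 : G.cliqueNum ≤ 2 := by rw [hchi] at hf; omega
  have hcf : Chv.TF G := by
    intro a b c hab hbc hac
    have h3 : G.IsNClique 3 {a, b, c} := is3Clique_triple_iff.mpr ⟨hab, hac, hbc⟩
    have hle : ({a, b, c} : Finset V).card ≤ G.cliqueNum :=
      @SimpleGraph.IsClique.card_le_cliqueNum V G _ _ h3.isClique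
    rw [h3.card_eq] at hle
    omega
  obtain ⟨f, hprop⟩ := Chv.key hcf 10 Finset.univ (by simpa using Nat.lt_succ_iff.mp h)
    (by simpa using Nat.lt_succ_iff.mp h)
  have hcol : G.Colorable 3 :=
    ⟨Coloring.mk f (fun {u w} hadj => hprop u (Finset.mem_univ _) w (Finset.mem_univ _) hadj)⟩
  have hle3 : G.chromaticNumber ≤ 3 := hcol.chromaticNumber_le
  have : chi G ≤ 3 := by
    unfold chi
    have := ENat.toNat_le_toNat hle3 (by decide)
    simpa using this
  omega
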